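/- arXiv:2406.14013 — 3 statements merged into one kernel-verified Lean document; each statement's English description precedes it below -/
import Mathlib

section
/- Let A and B be g-circulant matrices of order k × k over a commutative ring. Then A·Bᵀ is a circulant matrix. -/
/-- The `g`-circulant matrix with first row `c`: entry `(i,j)` is `c (j - g*i)`. -/
def gCirc {k : ℕ} {R : Type*} (g : ℕ) (c : ZMod k → R) : Matrix (ZMod k) (ZMod k) R :=
  Matrix.of fun i j => c (j - (g : ZMod k) * i)

/-- A matrix is `g`-circulant if it equals `gCirc g c` for some first row `c`. -/
def IsGCirc {k : ℕ} {R : Type*} (g : ℕ) (A : Matrix (ZMod k) (ZMod k) R) : Prop :=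
  ∃ c : ZMod k → R, A = gCirc g c

theorem gCirc_mul_transpose_circulant {k : ℕ} [NeZero k] {R : Type*} [CommRing R]
    (g : ℕ) (A B : Matrix (ZMod k) (ZMod k) R)
    (hA : IsGCirc g A) (hB : IsGCirc g B) : IsGCirc 1 (A * B.transpose) := by
  obtain ⟨a, rfl⟩ := hA
  obtain ⟨b, rfl⟩ := hB
  refine ⟨fun d => ∑ l : ZMod k, a l * b (l - (g : ZMod k) * d), ?_⟩
  ext i j
  simp only [Matrix.mul_apply, Matrix.transpose_apply, gCirc, Matrix.of_apply]
  rw [← Equiv.sum_comp (Equiv.addRight ((g : ZMod k) * i)) (fun l => a (l - (g : ZMod k) * i) * b (l - (g : ZMod k) * j))]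
  simp only [Equiv.coe_addRight]
  congr 1
  ext l
  ring_nf
end

section
/- Let A be the g-circulant matrix of order 2^d × 2^d with first row (c_0, c_1, ..., c_{2^d - 1}) over the finite field F_{2^m}, where g > 1 is odd (so gcd(g, 2^d) = 1). Then A^(2^d) = (c_0^(2^d) + c_1^(2^d) + ... + c_{2^d - 1}^(2^d)) · I. -/
set_option linter.unusedSectionVars false

open Finset

section Lemmas

variable {k : ℕ} [NeZero k] {R : Type*} [CommRing R]

lemma gCirc_row_congr (g : ℕ) {c e : ZMod k → R} (h : ∀ v, c v = e v) :
    gCirc g c = gCirc g e := by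
  ext i j; simp only [gCirc, Matrix.of_apply, h]

lemma gCirc_mul (g h : ℕ) (c e : ZMod k → R) :
    gCirc g c * gCirc h e
      = gCirc (g * h) (fun v => ∑ s : ZMod k, c s * e (v - (h : ZMod k) * s)) := by
  ext i j
  simp only [Matrix.mul_apply, gCirc, Matrix.of_apply]
  refine Fintype.sum_equiv (Equiv.subRight ((g : ZMod k) * i)) _ _ fun t => ?_
  simp only [Equiv.subRight_apply]
  have harg : j - (h : ZMod k) * t
      = j - ((g * h : ℕ) : ZMod k) * i - (h : ZMod k) * (t - (g : ZMod k) * i) := by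
    push_cast; ring
  rw [harg]

lemma gCirc_congr {g g' : ℕ} (h : (g : ZMod k) = (g' : ZMod k)) (c : ZMod k → R) :
    gCirc g c = gCirc g' c := by
  ext i j; simp [gCirc, h]

lemma one_eq_gCirc :
    (1 : Matrix (ZMod k) (ZMod k) R) = gCirc 1 (fun v => if v = 0 then 1 else 0) := by
  ext i j
  simp [gCirc, Matrix.one_apply, sub_eq_zero, eq_comm]

lemma smul_one_eq_gCirc (μ : R) :
    μ • (1 : Matrix (ZMod k) (ZMod k) R) = gCirc 1 (fun v => if v = 0 then μ else 0) := by
  ext i j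
  simp [gCirc, Matrix.one_apply, sub_eq_zero, eq_comm, mul_ite]

lemma gCirc_pow (g : ℕ) (c : ZMod k → R) (n : ℕ) :
    ∃ e : ZMod k → R, gCirc g c ^ n = gCirc (g ^ n) e := by
  induction n with
  | zero => exact ⟨_, by rw [pow_zero, pow_zero]; exact one_eq_gCirc⟩
  | succ n ih =>
      obtain ⟨e, he⟩ := ih
      refine ⟨fun v => ∑ s : ZMod k, c s * e (v - ((g ^ n : ℕ) : ZMod k) * s), ?_⟩
      rw [pow_succ', he, gCirc_mul, ← pow_succ']

lemma circ_sq [CharP R 2] (w : ZMod k → R) :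
    gCirc 1 w ^ 2
      = gCirc 1 (fun v => ∑ s ∈ univ.filter (fun s : ZMod k => s + s = v), w s ^ 2) := by
  rw [sq, gCirc_mul]
  have h11 : (1 * 1 : ℕ) = 1 := rfl
  rw [h11]
  refine gCirc_row_congr 1 fun v => ?_
  simp only [Nat.cast_one, one_mul]
  rw [← Finset.sum_filter_add_sum_filter_not univ (fun s : ZMod k => s + s = v)]
  have h2 : ∑ s ∈ univ.filter (fun s : ZMod k => ¬(s + s = v)), w s * w (v - s) = 0 := by
    refine Finset.sum_involution (fun s _ => v - s) ?_ ?_ ?_ ?_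
    · intro s hs
      rw [sub_sub_cancel, mul_comm]
      exact CharTwo.add_self_eq_zero _
    · intro s hs _
      simp only [mem_filter, mem_univ, true_and] at hs
      intro hfix
      exact hs (by linear_combination -hfix)
    · intro s hs
      simp only [mem_filter, mem_univ, true_and] at hs ⊢
      intro hmem
      exact hs (by linear_combination -hmem)
    · intro s hs
      exact sub_sub_cancel v s
  rw [h2, add_zero]
  refine Finset.sum_congr rfl fun s hs => ?_
  simp only [mem_filter, mem_univ, true_and] at hs
  rw [(eq_sub_of_add_eq hs).symm, sq]

lemma circ_pow_pow [CharP R 2] (w : ZMod k → R) (j : ℕ) :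
    gCirc 1 w ^ (2 ^ j)
      = gCirc 1 (fun v => ∑ s ∈ univ.filter (fun s : ZMod k => (2 : ZMod k) ^ j * s = v),
          w s ^ (2 ^ j)) := by
  haveI : Fact (Nat.Prime 2) := ⟨Nat.prime_two⟩
  induction j with
  | zero =>
      simp only [pow_zero, pow_one, one_mul]
      refine gCirc_row_congr 1 fun v => ?_
      rw [Finset.filter_eq' univ v]
      simp
  | succ j ih =>
      rw [show (2 : ℕ) ^ (j + 1) = 2 ^ j * 2 from pow_succ 2 j, pow_mul, ih, circ_sq]
      refine gCirc_row_congr 1 fun v => ?_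
      have frob : ∀ (S : Finset (ZMod k)) (f : ZMod k → R),
          (∑ s ∈ S, f s) ^ 2 = ∑ s ∈ S, f s ^ 2 := fun S f => sum_pow_char 2 S f
      rw [Finset.sum_filter]
      have step : ∀ t : ZMod k,
          (if t + t = v then (∑ s ∈ univ.filter
              (fun s : ZMod k => (2 : ZMod k) ^ j * s = t), w s ^ 2 ^ j) ^ 2 else 0)
          = ∑ s : ZMod k, (if t + t = v then
              (if (2 : ZMod k) ^ j * s = t then w s ^ (2 ^ j * 2) else 0) else 0) := by
        intro t
        split_ifs with h
        · rw [frob, Finset.sum_filter]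
          refine Finset.sum_congr rfl fun s _ => ?_
          split_ifs with h2
          · rw [← pow_mul]
          · rfl
        · simp
      rw [Finset.sum_congr rfl fun t _ => step t, Finset.sum_comm, Finset.sum_filter]
      refine Finset.sum_congr rfl fun s _ => ?_
      rw [Finset.sum_eq_single ((2 : ZMod k) ^ j * s)]
      · have hcond : ((2 : ZMod k) ^ (j + 1) * s = v)
            ↔ ((2 : ZMod k) ^ j * s + (2 : ZMod k) ^ j * s = v) := by
          constructor
          · intro h; linear_combination h
          · intro h; linear_combination h
        by_cases h : (2 : ZMod k) ^ j * s + (2 : ZMod k) ^ j * s = v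
        · rw [if_pos h, if_pos rfl, if_pos (hcond.mpr h)]
        · rw [if_neg h, if_neg (fun hh => h (hcond.mp hh))]
      · intro t _ ht
        split_ifs with h1 h2
        · exact absurd h2.symm ht
        · rfl
        · rfl
      · intro h; exact absurd (Finset.mem_univ _) h

end Lemmas

lemma circ_pow_card {d : ℕ} {R : Type*} [CommRing R] [CharP R 2] (w : ZMod (2 ^ d) → R) :
    gCirc 1 w ^ (2 ^ d)
      = (∑ s : ZMod (2 ^ d), w s ^ (2 ^ d)) • (1 : Matrix (ZMod (2 ^ d)) (ZMod (2 ^ d)) R) := by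
  haveI : NeZero (2 ^ d) := ⟨pow_ne_zero d two_ne_zero⟩
  rw [circ_pow_pow w d, smul_one_eq_gCirc]
  refine gCirc_row_congr 1 fun v => ?_
  have h20 : (2 : ZMod (2 ^ d)) ^ d = 0 := by
    have h := ZMod.natCast_self (2 ^ d)
    push_cast at h
    exact h
  simp only [h20, zero_mul]
  by_cases hv : v = 0
  · subst hv
    rw [if_pos rfl, Finset.filter_true_of_mem (fun _ _ => rfl)]
  · rw [if_neg hv, Finset.filter_false_of_mem, Finset.sum_empty]
    exact fun s _ h => hv h.symm

lemma odd_cast_pow_two_pow (d : ℕ) {g : ℕ} (hodd : Odd g) :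
    (g : ZMod (2 ^ d)) ^ (2 ^ d) = 1 := by
  rcases Nat.eq_zero_or_pos d with rfl | hd
  · haveI : Subsingleton (ZMod (2 ^ 0)) := by rw [pow_zero]; infer_instance
    exact Subsingleton.elim _ _
  · have hco : Nat.Coprime g (2 ^ d) := (Nat.coprime_two_right.mpr hodd).pow_right d
    have hdvd : Nat.totient (2 ^ d) ∣ 2 ^ d := by
      rw [Nat.totient_prime_pow Nat.prime_two hd]
      simpa using pow_dvd_pow 2 (Nat.sub_le d 1)
    obtain ⟨t, ht⟩ := hdvd
    have hu : (ZMod.unitOfCoprime g hco) ^ (2 ^ d) = 1 := by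
      have hsplit : (ZMod.unitOfCoprime g hco) ^ (2 ^ d)
          = ((ZMod.unitOfCoprime g hco) ^ (Nat.totient (2 ^ d))) ^ t := by
        rw [← pow_mul, ← ht]
      rw [hsplit, ZMod.pow_totient, one_pow]
    calc (g : ZMod (2 ^ d)) ^ (2 ^ d)
        = ((ZMod.unitOfCoprime g hco : (ZMod (2 ^ d))ˣ) : ZMod (2 ^ d)) ^ (2 ^ d) := by
          rw [ZMod.coe_unitOfCoprime]
      _ = (((ZMod.unitOfCoprime g hco) ^ (2 ^ d) : (ZMod (2 ^ d))ˣ) : ZMod (2 ^ d)) := by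
          rw [Units.val_pow_eq_pow_val]
      _ = 1 := by rw [hu, Units.val_one]

lemma rowsum_mul {k : ℕ} [NeZero k] {R : Type*} [CommRing R]
    {X Y : Matrix (ZMod k) (ZMod k) R} {α β : R}
    (hX : ∀ i, ∑ j, X i j = α) (hY : ∀ i, ∑ j, Y i j = β) :
    ∀ i, ∑ j, (X * Y) i j = α * β := by
  intro i
  simp only [Matrix.mul_apply]
  rw [Finset.sum_comm]
  calc ∑ t : ZMod k, ∑ j : ZMod k, X i t * Y t j
      = ∑ t : ZMod k, X i t * β := Finset.sum_congr rfl fun t _ => by rw [← Finset.mul_sum, hY]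
    _ = α * β := by rw [← Finset.sum_mul, hX]

lemma rowsum_pow {k : ℕ} [NeZero k] {R : Type*} [CommRing R]
    {X : Matrix (ZMod k) (ZMod k) R} {α : R}
    (hX : ∀ i, ∑ j, X i j = α) (n : ℕ) : ∀ i, ∑ j, (X ^ n) i j = α ^ n := by
  induction n with
  | zero =>
      intro i
      rw [pow_zero, pow_zero]
      simp [Matrix.one_apply]
  | succ n ih =>
      intro i
      rw [pow_succ, pow_succ]
      exact rowsum_mul ih hX i

lemma rowsum_gCirc {k : ℕ} [NeZero k] {R : Type*} [CommRing R] (g : ℕ) (c : ZMod k → R)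
    (i : ZMod k) : ∑ j, gCirc g c i j = ∑ s, c s :=
  Fintype.sum_equiv (Equiv.subRight ((g : ZMod k) * i)) _ _ fun j => rfl

theorem gCirc_pow_two_pow_eq_scalar {d m : ℕ} (hm : 0 < m)
    {F : Type*} [Field F] [Fintype F] (hcard : Fintype.card F = 2 ^ m)
    (g : ℕ) (hg : 1 < g) (hodd : Odd g) (c : ZMod (2 ^ d) → F) :
    (gCirc g c) ^ (2 ^ d) = (∑ i : ZMod (2 ^ d), c i ^ (2 ^ d)) • (1 : Matrix (ZMod (2 ^ d)) (ZMod (2 ^ d)) F) := by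
  haveI : NeZero (2 ^ d) := ⟨pow_ne_zero d two_ne_zero⟩
  haveI : Fact (Nat.Prime 2) := ⟨Nat.prime_two⟩
  haveI hch : CharP F 2 := by
    obtain ⟨n, hp2, hcard'⟩ := FiniteField.card F (ringChar F)
    have h2m : ringChar F ∣ 2 ^ m := by
      rw [← hcard, hcard']
      exact dvd_pow_self _ n.pos.ne'
    have : ringChar F = 2 :=
      (Nat.prime_dvd_prime_iff_eq hp2 Nat.prime_two).mp (hp2.dvd_of_dvd_pow h2m)
    exact this ▸ ringChar.charP F
  -- A^(2^d) is an ordinary circulant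
  obtain ⟨e, he⟩ := gCirc_pow g c (2 ^ d)
  have hcast : ((g ^ (2 ^ d) : ℕ) : ZMod (2 ^ d)) = ((1 : ℕ) : ZMod (2 ^ d)) := by
    push_cast
    rw [odd_cast_pow_two_pow d hodd]
  have he2 : gCirc g c ^ 2 ^ d = gCirc 1 e := he.trans (gCirc_congr hcast e)
  -- big power is a scalar
  have hscal : gCirc g c ^ (2 ^ (d + d)) = (∑ s, e s ^ (2 ^ d)) • 1 := by
    rw [pow_add, pow_mul, he2, circ_pow_card]
  -- identify the scalar via row sums
  have hrs : ∀ i, ∑ j, (gCirc g c ^ (2 ^ (d + d))) i j = (∑ s, c s) ^ (2 ^ (d + d)) :=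
    rowsum_pow (rowsum_gCirc g c) _
  have hl : (∑ s, e s ^ (2 ^ d)) = (∑ s, c s) ^ (2 ^ (d + d)) := by
    have h0 := hrs 0
    rw [hscal] at h0
    simpa [Matrix.smul_apply, Matrix.one_apply, mul_ite] using h0
  have hscal2 : gCirc g c ^ (2 ^ (d + d))
      = ((∑ s, c s) ^ (2 ^ (d + d))) • (1 : Matrix (ZMod (2 ^ d)) (ZMod (2 ^ d)) F) := by
    rw [hscal, hl]
  -- the shifted matrix is nilpotent
  set μ : F := ∑ s, c s with hμ
  set X : Matrix (ZMod (2 ^ d)) (ZMod (2 ^ d)) F := gCirc g c + μ • 1 with hX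
  have hcomm : Commute (gCirc g c) (μ • (1 : Matrix (ZMod (2 ^ d)) (ZMod (2 ^ d)) F)) :=
    (Commute.one_right _).smul_right _
  have hXpow : X ^ (2 ^ (d + d)) = 0 := by
    rw [hX, add_pow_char_pow_of_commute 2 (d + d) hcomm, hscal2, smul_pow, one_pow]
    exact CharTwo.add_self_eq_zero _
  have hnil : IsNilpotent X := ⟨_, hXpow⟩
  have hcp : X.charpoly = Polynomial.X ^ (Fintype.card (ZMod (2 ^ d))) :=
    sub_eq_zero.mp (Matrix.isNilpotent_charpoly_sub_pow_of_isNilpotent hnil).eq_zero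
  have hX2d : X ^ (2 ^ d) = 0 := by
    have h := Matrix.aeval_self_charpoly X
    rw [hcp, ZMod.card] at h
    simpa using h
  have hcommX : Commute X (μ • (1 : Matrix (ZMod (2 ^ d)) (ZMod (2 ^ d)) F)) :=
    (Commute.one_right _).smul_right _
  have hAX : gCirc g c = X + μ • 1 := by
    rw [hX, add_assoc, CharTwo.add_self_eq_zero, add_zero]
  calc gCirc g c ^ (2 ^ d) = (X + μ • 1) ^ (2 ^ d) := by rw [← hAX]
    _ = X ^ (2 ^ d) + (μ • (1 : Matrix (ZMod (2 ^ d)) (ZMod (2 ^ d)) F)) ^ (2 ^ d) :=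
        add_pow_char_pow_of_commute 2 d hcommX
    _ = (μ ^ (2 ^ d)) • 1 := by rw [hX2d, zero_add, smul_pow, one_pow]
    _ = (∑ i : ZMod (2 ^ d), c i ^ (2 ^ d)) • 1 := by rw [hμ, sum_pow_char_pow]
end

section
/- Let A be the g-circulant matrix of order 2^d × 2^d with first row (c_0, ..., c_{2^d - 1}) over F_{2^m}, where gcd(g, 2^d) = 1. Then det(A) = (c_0 + c_1 + ... + c_{2^d - 1})^(2^d). -/
open Finset Equiv

section Aux
variable {k : ℕ}

/-- Translation action of `ZMod k` on permutations, depending on the multiplier `g`. -/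
def psiPerm (g : ℕ) (t : ZMod k) (σ : Equiv.Perm (ZMod k)) : Equiv.Perm (ZMod k) :=
  ((Equiv.subRight ((g : ZMod k) * t)).trans σ).trans (Equiv.addRight t)

lemma psiPerm_apply (g : ℕ) (t : ZMod k) (σ : Equiv.Perm (ZMod k)) (i : ZMod k) :
    psiPerm g t σ i = σ (i - (g : ZMod k) * t) + t := rfl

lemma psiPerm_zero (g : ℕ) (σ : Equiv.Perm (ZMod k)) : psiPerm g 0 σ = σ := by
  ext i; simp [psiPerm_apply]

lemma psiPerm_add (g : ℕ) (s t : ZMod k) (σ : Equiv.Perm (ZMod k)) :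
    psiPerm g (s + t) σ = psiPerm g s (psiPerm g t σ) := by
  ext i
  rw [psiPerm_apply, psiPerm_apply, psiPerm_apply,
    show i - (g : ZMod k) * s - (g : ZMod k) * t = i - (g : ZMod k) * (s + t) by ring]
  rw [add_comm s t, ← add_assoc]

lemma psiPerm_comm (g : ℕ) (s t : ZMod k) (σ : Equiv.Perm (ZMod k)) :
    psiPerm g s (psiPerm g t σ) = psiPerm g t (psiPerm g s σ) := by
  rw [← psiPerm_add, add_comm, psiPerm_add]

lemma psiPerm_injective (g : ℕ) (t : ZMod k) : Function.Injective (psiPerm g t (k := k)) := by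
  intro σ τ h
  have := congrArg (psiPerm g (-t)) h
  rwa [← psiPerm_add, ← psiPerm_add, neg_add_cancel, psiPerm_zero, psiPerm_zero] at this

/-- The affine permutation `i ↦ u⁻¹ (i - a)`. -/
def affPerm (gu : (ZMod k)ˣ) (a : ZMod k) : Equiv.Perm (ZMod k) :=
  (Equiv.subRight a).trans (Units.mulLeft gu⁻¹)

lemma affPerm_apply (gu : (ZMod k)ˣ) (a i : ZMod k) :
    affPerm gu a i = (gu⁻¹ : (ZMod k)ˣ) * (i - a) := rfl

end Aux

theorem gCirc_det_eq {d m : ℕ} (hm : 0 < m)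
    {F : Type*} [Field F] [Fintype F] (hcard : Fintype.card F = 2 ^ m)
    (g : ℕ) (hg : Nat.gcd g (2 ^ d) = 1) (c : ZMod (2 ^ d) → F) :
    (gCirc g c).det = (∑ i : ZMod (2 ^ d), c i) ^ (2 ^ d) := by
  classical
  haveI : NeZero (2 ^ d) := ⟨pow_ne_zero d two_ne_zero⟩
  -- characteristic 2
  haveI hp2 : CharP F 2 := by
    haveI := ringChar.charP F
    have hprime : (ringChar F).Prime := CharP.char_is_prime F (ringChar F)
    obtain ⟨n, -, hc⟩ := FiniteField.card F (ringChar F)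
    have : ringChar F = 2 := by
      have hdvd : ringChar F ∣ 2 ^ m := by
        rw [← hcard, hc]; exact dvd_pow_self _ n.ne_zero
      have := hprime.dvd_of_dvd_pow (n := m) hdvd
      exact ((Nat.prime_dvd_prime_iff_eq hprime Nat.prime_two).mp this)
    rwa [this] at ‹CharP F (ringChar F)›
  set f : Equiv.Perm (ZMod (2 ^ d)) → F := fun σ => ∏ i, c (i - (g : (ZMod (2 ^ d))) * σ i) with hfdef
  have hneg : ∀ x : F, -x = x := fun x => CharTwo.neg_eq x
  -- Step 1: det as unsigned sum
  have hdet : (gCirc g c).det = ∑ σ : Equiv.Perm (ZMod (2 ^ d)), f σ := by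
    rw [Matrix.det_apply]
    refine Finset.sum_congr rfl fun σ _ => ?_
    rcases Int.units_eq_one_or (Equiv.Perm.sign σ) with h | h <;>
      simp [h, gCirc, f, hneg]
  -- invariance of f under the action
  have hinv : ∀ (t : (ZMod (2 ^ d))) (σ : Equiv.Perm (ZMod (2 ^ d))), f (psiPerm g t σ) = f σ := by
    intro t σ
    have := Equiv.prod_comp (Equiv.addRight ((g : (ZMod (2 ^ d))) * t))
      (fun j => c (j - (g : (ZMod (2 ^ d))) * σ (j - (g : (ZMod (2 ^ d))) * t) - (g : (ZMod (2 ^ d))) * t))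
    calc f (psiPerm g t σ)
        = ∏ i, c (i - (g : (ZMod (2 ^ d))) * σ (i - (g : (ZMod (2 ^ d))) * t) - (g : (ZMod (2 ^ d))) * t) := by
          refine Finset.prod_congr rfl fun i _ => ?_
          rw [psiPerm_apply]; ring_nf
      _ = ∏ j, c (j - (g : (ZMod (2 ^ d))) * σ j) := by
          rw [← this]
          refine Finset.prod_congr rfl fun j _ => ?_
          congr 1
          simp only [Equiv.coe_addRight]
          ring_nf
      _ = f σ := rfl
  -- the unit g
  set gu : (ZMod (2 ^ d))ˣ := ZMod.unitOfCoprime g hg with hgu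
  have hguc : (gu : (ZMod (2 ^ d))) = (g : (ZMod (2 ^ d))) := ZMod.coe_unitOfCoprime g hg
  have hunit1 : ((gu⁻¹ : (ZMod (2 ^ d))ˣ) : (ZMod (2 ^ d))) * (g : (ZMod (2 ^ d))) = 1 := by rw [← hguc]; exact Units.inv_mul gu
  have hunit2 : ∀ x : (ZMod (2 ^ d)), (g : (ZMod (2 ^ d))) * (((gu⁻¹ : (ZMod (2 ^ d))ˣ) : (ZMod (2 ^ d))) * x) = x := by
    intro x; rw [← hguc, ← mul_assoc, Units.mul_inv, one_mul]
  -- affine permutations are fixed points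
  have haff_fixed : ∀ a : (ZMod (2 ^ d)), psiPerm g 1 (affPerm gu a) = affPerm gu a := by
    intro a; ext i
    rw [psiPerm_apply, affPerm_apply, affPerm_apply, mul_one,
      show i - (g : (ZMod (2 ^ d))) - a = (i - a) - (g : (ZMod (2 ^ d))) by ring, mul_sub, hunit1]
    ring
  -- fixed points are affine
  have hfixed_aff : ∀ σ : Equiv.Perm (ZMod (2 ^ d)), psiPerm g 1 σ = σ →
      σ = affPerm gu (-((g : (ZMod (2 ^ d))) * σ 0)) := by
    intro σ hσ
    have hall : ∀ n : ℕ, psiPerm g ((n : ℕ) : (ZMod (2 ^ d))) σ = σ := by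
      intro n
      induction n with
      | zero => simpa using psiPerm_zero g σ
      | succ n ih => rw [Nat.cast_succ, psiPerm_add, hσ, ih]
    have ht : ∀ t : (ZMod (2 ^ d)), psiPerm g t σ = σ := by
      intro t
      obtain ⟨n, rfl⟩ := ZMod.natCast_zmod_surjective t
      exact hall n
    have key : ∀ t : (ZMod (2 ^ d)), σ ((g : (ZMod (2 ^ d))) * t) = σ 0 + t := by
      intro t
      have h := Equiv.ext_iff.mp (ht t) ((g : (ZMod (2 ^ d))) * t)
      rw [psiPerm_apply, sub_self] at h
      exact h.symm
    ext i
    have h3 := key (((gu⁻¹ : (ZMod (2 ^ d))ˣ) : (ZMod (2 ^ d))) * i)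
    rw [hunit2 i] at h3
    rw [h3, affPerm_apply, sub_neg_eq_add, mul_add, ← mul_assoc, hunit1, one_mul, add_comm]
  -- value on affine permutations
  have hf_aff : ∀ a : (ZMod (2 ^ d)), f (affPerm gu a) = c a ^ 2 ^ d := by
    intro a
    have harg : ∀ i : (ZMod (2 ^ d)), i - (g : (ZMod (2 ^ d))) * ((gu⁻¹ : (ZMod (2 ^ d))ˣ) * (i - a)) = a := by
      intro i; rw [hunit2]; ring
    calc f (affPerm gu a) = ∏ _i : (ZMod (2 ^ d)), c a := by
          refine Finset.prod_congr rfl fun i _ => ?_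
          rw [affPerm_apply, harg i]
      _ = c a ^ 2 ^ d := by rw [Finset.prod_const, Finset.card_univ, ZMod.card]
  -- split the sum
  have hsplit : ∑ σ : Equiv.Perm (ZMod (2 ^ d)), f σ =
      (∑ σ ∈ Finset.univ.filter (fun σ : Equiv.Perm (ZMod (2 ^ d)) => psiPerm g 1 σ = σ), f σ) +
      ∑ σ ∈ Finset.univ.filter (fun σ : Equiv.Perm (ZMod (2 ^ d)) => ¬ psiPerm g 1 σ = σ), f σ :=
    (Finset.sum_filter_add_sum_filter_not _ _ _).symm
  -- key commutation property
  have hiff : ∀ (u t : (ZMod (2 ^ d))) (σ : Equiv.Perm (ZMod (2 ^ d))),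
      psiPerm g t (psiPerm g u σ) = psiPerm g u σ ↔ psiPerm g t σ = σ := by
    intro u t σ
    constructor
    · intro h; apply psiPerm_injective g u; rwa [← psiPerm_comm]
    · intro h; rw [psiPerm_comm, h]
  -- the non-fixed part vanishes (involution argument)
  have hzero : ∑ σ ∈ Finset.univ.filter
      (fun σ : Equiv.Perm (ZMod (2 ^ d)) => ¬ psiPerm g 1 σ = σ), f σ = 0 := by
    have hlast : ∀ σ : Equiv.Perm (ZMod (2 ^ d)), psiPerm g ((2 ^ d : ℕ) : (ZMod (2 ^ d))) σ = σ := by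
      intro σ
      rw [show (((2 : ℕ) ^ d : ℕ) : (ZMod (2 ^ d))) = 0 from ZMod.natCast_self (2 ^ d), psiPerm_zero]
    have ex : ∀ σ : Equiv.Perm (ZMod (2 ^ d)), ∃ e, psiPerm g ((2 ^ e : ℕ) : (ZMod (2 ^ d))) σ = σ :=
      fun σ => ⟨d, hlast σ⟩
    set ι : Equiv.Perm (ZMod (2 ^ d)) → Equiv.Perm (ZMod (2 ^ d)) :=
      fun σ => psiPerm g ((2 ^ (Nat.find (ex σ) - 1) : ℕ) : (ZMod (2 ^ d))) σ with hι
    have hfindpos : ∀ σ : Equiv.Perm (ZMod (2 ^ d)), psiPerm g 1 σ ≠ σ → 0 < Nat.find (ex σ) := by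
      intro σ hσ
      rcases Nat.eq_zero_or_pos (Nat.find (ex σ)) with h0 | h
      · exfalso
        have := Nat.find_spec (ex σ)
        rw [h0] at this
        simp only [pow_zero, Nat.cast_one] at this
        exact hσ this
      · exact h
    have hfind_eq : ∀ (σ : Equiv.Perm (ZMod (2 ^ d))) (u : (ZMod (2 ^ d))),
        Nat.find (ex (psiPerm g u σ)) = Nat.find (ex σ) := by
      intro σ u
      apply le_antisymm
      · exact Nat.find_min' _ ((hiff u _ σ).mpr (Nat.find_spec (ex σ)))
      · exact Nat.find_min' _ ((hiff u _ σ).mp (Nat.find_spec (ex (psiPerm g u σ))))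
    refine Finset.sum_involution (fun σ _ => ι σ) ?_ ?_ ?_ ?_
    · intro σ hσ
      have h : f (ι σ) = f σ := hinv ((2 ^ (Nat.find (ex σ) - 1) : ℕ) : (ZMod (2 ^ d))) σ
      rw [h]
      exact CharTwo.add_self_eq_zero _
    · intro σ hσ _
      simp only [Finset.mem_filter, Finset.mem_univ, true_and] at hσ
      intro heq
      have e1 := hfindpos σ hσ
      have : Nat.find (ex σ) ≤ Nat.find (ex σ) - 1 := Nat.find_min' (ex σ) heq
      omega
    · intro σ hσ
      simp only [Finset.mem_filter, Finset.mem_univ, true_and] at hσ ⊢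
      intro h
      exact hσ ((hiff ((2 ^ (Nat.find (ex σ) - 1) : ℕ) : (ZMod (2 ^ d))) 1 σ).mp h)
    · intro σ hσ
      simp only [Finset.mem_filter, Finset.mem_univ, true_and] at hσ
      have e1 := hfindpos σ hσ
      have hE : Nat.find (ex (ι σ)) = Nat.find (ex σ) :=
        hfind_eq σ ((2 ^ (Nat.find (ex σ) - 1) : ℕ) : (ZMod (2 ^ d)))
      show psiPerm g ((2 ^ (Nat.find (ex (ι σ)) - 1) : ℕ) : (ZMod (2 ^ d))) (ι σ) = σ
      rw [hE]
      show psiPerm g ((2 ^ (Nat.find (ex σ) - 1) : ℕ) : (ZMod (2 ^ d)))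
          (psiPerm g ((2 ^ (Nat.find (ex σ) - 1) : ℕ) : (ZMod (2 ^ d))) σ) = σ
      rw [← psiPerm_add, ← Nat.cast_add,
        show (2 : ℕ) ^ (Nat.find (ex σ) - 1) + 2 ^ (Nat.find (ex σ) - 1) = 2 ^ Nat.find (ex σ) by
          rw [← two_mul, ← pow_succ']
          congr 1
          omega]
      exact Nat.find_spec (ex σ)
  -- the fixed part
  have hfix : (∑ σ ∈ Finset.univ.filter (fun σ : Equiv.Perm (ZMod (2 ^ d)) => psiPerm g 1 σ = σ), f σ)
      = ∑ a : (ZMod (2 ^ d)), c a ^ 2 ^ d := by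
    refine Finset.sum_nbij' (fun σ => -((g : (ZMod (2 ^ d))) * σ 0)) (fun a => affPerm gu a)
      (fun σ _ => Finset.mem_univ _) ?_ ?_ ?_ ?_
    · intro a _
      simp only [Finset.mem_filter, Finset.mem_univ, true_and]
      exact haff_fixed a
    · intro σ hσ
      simp only [Finset.mem_filter, Finset.mem_univ, true_and] at hσ
      exact (hfixed_aff σ hσ).symm
    · intro a _
      show -((g : (ZMod (2 ^ d))) * (affPerm gu a) 0) = a
      rw [affPerm_apply, zero_sub, mul_neg, mul_neg, neg_neg, hunit2]
    · intro σ hσ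
      simp only [Finset.mem_filter, Finset.mem_univ, true_and] at hσ
      show f σ = c (-((g : (ZMod (2 ^ d))) * σ 0)) ^ 2 ^ d
      conv_lhs => rw [hfixed_aff σ hσ]
      exact hf_aff _
  have hfrob : (∑ i : (ZMod (2 ^ d)), c i) ^ 2 ^ d = ∑ i : (ZMod (2 ^ d)), c i ^ 2 ^ d :=
    sum_pow_char_pow (p := 2) (n := d) Finset.univ c
  rw [hdet, hsplit, hzero, add_zero, hfix, hfrob]
end
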